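/- arXiv:0906.0178 — 3 statements merged into one kernel-verified Lean document; each statement's English description precedes it below -/
import Mathlib

section
/- Let a : ℝ → ℝ be C¹ with a(t) ≠ 0 and f : ℝ → ℝ be C¹ with f ≥ 0. Define on ℝᴺ (N ≥ 2) the density ρ(t,x) = f((x₁² + x₂²)/a(t))/a(t) and velocity u(t,x) = (ȧ(t)/(2a(t)))·(x₁, x₂, x₁+x₂, ..., x₁+x₂). Then (ρ, u) satisfies the continuity equation ρ_t + ∇·(ρu) = 0 pointwise. -/
/-- Partial derivative in the `i`-th coordinate of a function on `ℝᴺ`. -/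
noncomputable def pd {N : ℕ} (i : Fin N) (g : (Fin N → ℝ) → ℝ) (x : Fin N → ℝ) : ℝ :=
  deriv (fun y => g (Function.update x i y)) (x i)

/-- The density `ρ = f((x₁²+x₂²)/a)/a` and velocity
`u = (ȧ/2a)(x₁, x₂, x₁+x₂, …, x₁+x₂)` satisfy the continuity equation. -/
theorem stmt_2 {N : ℕ} [NeZero N] (hN : 2 ≤ N)
    (a f : ℝ → ℝ) (ha : ContDiff ℝ 1 a) (ha0 : ∀ t, a t ≠ 0)
    (hf : ContDiff ℝ 1 f) (hf0 : ∀ s, 0 ≤ f s)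
    (ρ : ℝ → (Fin N → ℝ) → ℝ)
    (hρ : ρ = fun t x => f ((x 0 ^ 2 + x 1 ^ 2) / a t) / a t)
    (u : ℝ → (Fin N → ℝ) → Fin N → ℝ)
    (hu : u = fun t x i => deriv a t / (2 * a t) *
      (if i = 0 then x 0 else if i = 1 then x 1 else x 0 + x 1)) :
    ∀ (t : ℝ) (x : Fin N → ℝ),
      deriv (fun s => ρ s x) t + ∑ i : Fin N, pd i (fun y => ρ t y * u t y i) x = 0 := by
  subst hρ hu
  intro t x
  have h01 : (0 : Fin N) ≠ 1 := by
    simp [Fin.ext_iff, Fin.val_one']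
    omega
  have hA : a t ≠ 0 := ha0 t
  set A : ℝ := a t with hAdef
  set A' : ℝ := deriv a t with hA'def
  set r2 : ℝ := x 0 ^ 2 + x 1 ^ 2 with hr2
  set F : ℝ := f (r2 / A) with hF
  set F' : ℝ := deriv f (r2 / A) with hF'
  have hfd : ∀ p : ℝ, HasDerivAt f (deriv f p) p := fun p =>
    ((hf.differentiable one_ne_zero) p).hasDerivAt
  have had : HasDerivAt a A' t := ((ha.differentiable one_ne_zero) t).hasDerivAt
  -- Time derivative
  have hmulinv : r2 * A⁻¹ = r2 / A := (div_eq_mul_inv _ _).symm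
  have hFi : HasDerivAt f F' (r2 * A⁻¹) := by rw [hmulinv]; exact hfd _
  have hinv : HasDerivAt (fun s => (a s)⁻¹) (-A' / A ^ 2) t := had.inv hA
  have hinner : HasDerivAt (fun s => r2 * (a s)⁻¹) (r2 * (-A' / A ^ 2)) t :=
    hinv.const_mul r2
  have hcomp : HasDerivAt (fun s => f (r2 * (a s)⁻¹)) (F' * (r2 * (-A' / A ^ 2))) t :=
    hFi.comp t hinner
  have htime : HasDerivAt (fun s => f ((x 0 ^ 2 + x 1 ^ 2) / a s) / a s)
      (F' * (r2 * (-A' / A ^ 2)) * A⁻¹ + f (r2 * A⁻¹) * (-A' / A ^ 2)) t := by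
    have := hcomp.mul hinv
    exact this
  have hT : deriv (fun s => f ((x 0 ^ 2 + x 1 ^ 2) / a s) / a s) t
      = F' * (r2 * (-A' / A ^ 2)) * A⁻¹ + F * (-A' / A ^ 2) := by
    rw [htime.deriv, hmulinv]
  -- Spatial derivative in coordinate 0
  have hP0 : pd 0 (fun y => f ((y 0 ^ 2 + y 1 ^ 2) / a t) / a t *
      (deriv a t / (2 * a t) * (if (0 : Fin N) = 0 then y 0 else if (0 : Fin N) = 1 then y 1 else y 0 + y 1))) x
      = F' * (2 * x 0 ^ 1 / A) / A * (A' / (2 * A) * x 0) + F / A * (A' / (2 * A) * 1) := by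
    unfold pd
    have heq : (fun y => f (((Function.update x 0 y) 0 ^ 2 + (Function.update x 0 y) 1 ^ 2) / a t) / a t *
        (deriv a t / (2 * a t) * (if (0 : Fin N) = 0 then (Function.update x 0 y) 0 else if (0 : Fin N) = 1 then (Function.update x 0 y) 1 else (Function.update x 0 y) 0 + (Function.update x 0 y) 1)))
        = fun y => f ((y ^ 2 + x 1 ^ 2) / A) / A * (A' / (2 * A) * y) := by
      funext y
      rw [Function.update_self, Function.update_of_ne h01.symm]
      simp [← hAdef, ← hA'def]
    rw [heq]
    have hi1 : HasDerivAt (fun y : ℝ => (y ^ 2 + x 1 ^ 2) / A) (2 * x 0 ^ 1 / A) (x 0) :=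
      (((hasDerivAt_pow 2 (x 0)).add_const (x 1 ^ 2)).div_const A)
    have hc1 : HasDerivAt (fun y : ℝ => f ((y ^ 2 + x 1 ^ 2) / A)) (F' * (2 * x 0 ^ 1 / A)) (x 0) :=
      (hfd ((x 0 ^ 2 + x 1 ^ 2) / A)).comp (x 0) hi1
    have hv : HasDerivAt (fun y : ℝ => A' / (2 * A) * y) (A' / (2 * A) * 1) (x 0) :=
      (hasDerivAt_id (x 0)).const_mul _
    exact ((hc1.div_const A).mul hv).deriv
  -- Spatial derivative in coordinate 1
  have hP1 : pd 1 (fun y => f ((y 0 ^ 2 + y 1 ^ 2) / a t) / a t *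
      (deriv a t / (2 * a t) * (if (1 : Fin N) = 0 then y 0 else if (1 : Fin N) = 1 then y 1 else y 0 + y 1))) x
      = F' * (2 * x 1 ^ 1 / A) / A * (A' / (2 * A) * x 1) + F / A * (A' / (2 * A) * 1) := by
    unfold pd
    have heq : (fun y => f (((Function.update x 1 y) 0 ^ 2 + (Function.update x 1 y) 1 ^ 2) / a t) / a t *
        (deriv a t / (2 * a t) * (if (1 : Fin N) = 0 then (Function.update x 1 y) 0 else if (1 : Fin N) = 1 then (Function.update x 1 y) 1 else (Function.update x 1 y) 0 + (Function.update x 1 y) 1)))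
        = fun y => f ((x 0 ^ 2 + y ^ 2) / A) / A * (A' / (2 * A) * y) := by
      funext y
      rw [Function.update_self, Function.update_of_ne h01]
      simp [h01.symm, ← hAdef, ← hA'def]
    rw [heq]
    have hi1 : HasDerivAt (fun y : ℝ => (x 0 ^ 2 + y ^ 2) / A) (2 * x 1 ^ 1 / A) (x 1) :=
      (((hasDerivAt_pow 2 (x 1)).const_add (x 0 ^ 2)).div_const A)
    have hc1 : HasDerivAt (fun y : ℝ => f ((x 0 ^ 2 + y ^ 2) / A)) (F' * (2 * x 1 ^ 1 / A)) (x 1) :=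
      (hfd ((x 0 ^ 2 + x 1 ^ 2) / A)).comp (x 1) hi1
    have hv : HasDerivAt (fun y : ℝ => A' / (2 * A) * y) (A' / (2 * A) * 1) (x 1) :=
      (hasDerivAt_id (x 1)).const_mul _
    exact ((hc1.div_const A).mul hv).deriv
  -- Other coordinates contribute nothing
  have hPi : ∀ i : Fin N, i ≠ 0 → i ≠ 1 →
      pd i (fun y => f ((y 0 ^ 2 + y 1 ^ 2) / a t) / a t *
        (deriv a t / (2 * a t) * (if i = 0 then y 0 else if i = 1 then y 1 else y 0 + y 1))) x = 0 := by
    intro i hi0 hi1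
    unfold pd
    have heq : (fun y => f (((Function.update x i y) 0 ^ 2 + (Function.update x i y) 1 ^ 2) / a t) / a t *
        (deriv a t / (2 * a t) * (if i = 0 then (Function.update x i y) 0 else if i = 1 then (Function.update x i y) 1 else (Function.update x i y) 0 + (Function.update x i y) 1)))
        = fun _ : ℝ => f ((x 0 ^ 2 + x 1 ^ 2) / a t) / a t * (deriv a t / (2 * a t) * (x 0 + x 1)) := by
      funext y
      rw [Function.update_of_ne (Ne.symm hi0), Function.update_of_ne (Ne.symm hi1)]
      simp [hi0, hi1]
    rw [heq, deriv_const]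
  -- Sum reduces to the two first coordinates
  have hsum : ∑ i : Fin N, pd i (fun y => f ((y 0 ^ 2 + y 1 ^ 2) / a t) / a t *
        (deriv a t / (2 * a t) * (if i = 0 then y 0 else if i = 1 then y 1 else y 0 + y 1))) x
      = (F' * (2 * x 0 ^ 1 / A) / A * (A' / (2 * A) * x 0) + F / A * (A' / (2 * A) * 1))
        + (F' * (2 * x 1 ^ 1 / A) / A * (A' / (2 * A) * x 1) + F / A * (A' / (2 * A) * 1)) := by
    have hvan : ∀ i ∈ (Finset.univ : Finset (Fin N)), i ∉ ({0, 1} : Finset (Fin N)) →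
        pd i (fun y => f ((y 0 ^ 2 + y 1 ^ 2) / a t) / a t *
          (deriv a t / (2 * a t) * (if i = 0 then y 0 else if i = 1 then y 1 else y 0 + y 1))) x = 0 := by
      intro i _ hi
      simp only [Finset.mem_insert, Finset.mem_singleton, not_or] at hi
      exact hPi i hi.1 hi.2
    rw [← Finset.sum_subset (Finset.subset_univ ({0, 1} : Finset (Fin N))) hvan,
      Finset.sum_pair h01, hP0, hP1]
  rw [hT, hsum]
  field_simp
  ring
end

section
/- Define ρ(t,x) = (1/a(t)²)·e^{−Φ((Ax₁+Bx₂)/a(t))/K + C}, u(t,x) = (ȧ(t)/a(t))(x₁, x₂, x₁, ..., x₁), a(t) = a₁ + a₂t with a₁ ≠ 0, and Φ a C² solution of Φ'' − (α(N)e^C/(A²+B²))·e^{−Φ/K} = 0 on ℝ. Then (ρ, u, Ψ) with Ψ(t,x) = Φ((Ax₁+Bx₂)/a(t)) solves the isothermal Euler–Poisson system ρ_t + ∇·(ρu) = 0; ρ(∂ₜuᵢ + (u·∇)uᵢ) + K∂ᵢρ = −ρ∂ᵢΨ; ΔΨ = α(N)ρ, on the time interval where a(t) ≠ 0. -/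
/-- Spatial Laplacian on `ℝᴺ`. -/
noncomputable def lap {N : ℕ} (g : (Fin N → ℝ) → ℝ) (x : Fin N → ℝ) : ℝ :=
  ∑ i : Fin N, pd i (fun y => pd i g y) x

lemma pd_congr' {N : ℕ} (i : Fin N) (g : (Fin N → ℝ) → ℝ) (h : ℝ → ℝ)
    (x : Fin N → ℝ) (H : ∀ y, g (Function.update x i y) = h y) :
    pd i g x = deriv h (x i) := by
  unfold pd
  congr 1
  exact funext H

lemma comp_affine_div {Φ : ℝ → ℝ} {d A b av : ℝ} {z : ℝ}
    (hF : HasDerivAt Φ d ((A * z + b) / av)) :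
    HasDerivAt (fun w => Φ ((A * w + b) / av)) (d * (A / av)) z := by
  simpa [Function.comp_def] using hF.comp z ((((hasDerivAt_id z).const_mul A).add_const b).div_const av)

lemma comp_affine_div' {Φ : ℝ → ℝ} {d A b av : ℝ} {z : ℝ}
    (hF : HasDerivAt Φ d ((b + A * z) / av)) :
    HasDerivAt (fun w => Φ ((b + A * w) / av)) (d * (A / av)) z := by
  simpa [Function.comp_def] using hF.comp z (((hasDerivAt_id z).const_mul A).const_add b |>.div_const av)

lemma rho_profile {Φ : ℝ → ℝ} (hΦ : Differentiable ℝ Φ) {K C A b av : ℝ} (z : ℝ) :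
    HasDerivAt (fun w => Real.exp (-Φ ((A * w + b) / av) / K + C) / av ^ 2)
      (Real.exp (-Φ ((A * z + b) / av) / K + C) / av ^ 2 *
        (-(deriv Φ ((A * z + b) / av)) * (A / av) / K)) z := by
  have h1 := comp_affine_div (A := A) (b := b) (av := av) (z := z) ((hΦ _).hasDerivAt)
  have h2 := (((h1.neg).div_const K).add_const C).exp.div_const (av ^ 2)
  refine h2.congr_deriv ?_
  simp only [Pi.neg_apply]
  ring

lemma rho_profile' {Φ : ℝ → ℝ} (hΦ : Differentiable ℝ Φ) {K C A b av : ℝ} (z : ℝ) :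
    HasDerivAt (fun w => Real.exp (-Φ ((b + A * w) / av) / K + C) / av ^ 2)
      (Real.exp (-Φ ((b + A * z) / av) / K + C) / av ^ 2 *
        (-(deriv Φ ((b + A * z) / av)) * (A / av) / K)) z := by
  have h1 := comp_affine_div' (A := A) (b := b) (av := av) (z := z) ((hΦ _).hasDerivAt)
  have h2 := (((h1.neg).div_const K).add_const C).exp.div_const (av ^ 2)
  refine h2.congr_deriv ?_
  simp only [Pi.neg_apply]
  ring

lemma rho_time {Φ : ℝ → ℝ} (hΦ : Differentiable ℝ Φ) {K C m a₁ a₂ : ℝ} (hK : K ≠ 0)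
    (t : ℝ) (ht : a₁ + a₂ * t ≠ 0) :
    HasDerivAt (fun s => Real.exp (-Φ (m / (a₁ + a₂ * s)) / K + C) / (a₁ + a₂ * s) ^ 2)
      (Real.exp (-Φ (m / (a₁ + a₂ * t)) / K + C) / (a₁ + a₂ * t) ^ 2 *
        (deriv Φ (m / (a₁ + a₂ * t)) * m * a₂ / (K * (a₁ + a₂ * t) ^ 2)
          - 2 * a₂ / (a₁ + a₂ * t))) t := by
  have ha : HasDerivAt (fun s => a₁ + a₂ * s) a₂ t := by
    simpa using ((hasDerivAt_id t).const_mul a₂).const_add a₁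
  have h1 : HasDerivAt (fun s => m / (a₁ + a₂ * s)) (-(m * a₂) / (a₁ + a₂ * t) ^ 2) t := by
    simpa [Pi.div_def] using (hasDerivAt_const t m).div ha ht
  have h2 : HasDerivAt (fun s => Φ (m / (a₁ + a₂ * s)))
      (deriv Φ (m / (a₁ + a₂ * t)) * (-(m * a₂) / (a₁ + a₂ * t) ^ 2)) t :=
    ((hΦ _).hasDerivAt).comp t h1
  have h3 := ((h2.neg.div_const K).add_const C).exp
  have h4 := h3.div (ha.pow 2) (pow_ne_zero 2 ht)
  refine h4.congr_deriv ?_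
  simp only [Pi.pow_apply, Pi.neg_apply]
  field_simp
  ring

lemma u_time {a₁ a₂ : ℝ} (q t : ℝ) (ht : a₁ + a₂ * t ≠ 0) :
    HasDerivAt (fun s => a₂ / (a₁ + a₂ * s) * q)
      (-(a₂ * a₂) / (a₁ + a₂ * t) ^ 2 * q) t := by
  have ha : HasDerivAt (fun s => a₁ + a₂ * s) a₂ t := by
    simpa using ((hasDerivAt_id t).const_mul a₂).const_add a₁
  have := ((hasDerivAt_const t a₂).div ha ht).mul_const q
  refine this.congr_deriv ?_
  ring

lemma sum_split {n : ℕ} [NeZero n] (h01 : (0 : Fin n) ≠ 1) (f : Fin n → ℝ) (T0 T1 : ℝ)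
    (hf : ∀ i, f i = (if i = 0 then T0 else 0) + (if i = 1 then T1 else 0)) :
    ∑ i, f i = T0 + T1 := by
  simp only [hf, Finset.sum_add_distrib, Finset.sum_ite_eq', Finset.mem_univ, if_true]

set_option maxHeartbeats 1000000 in
/-- Theorem 2: the non-radial family `ρ = (1/a²) e^{-Φ((Ax₁+Bx₂)/a)/K + C}`,
`u = (ȧ/a)(x₁,x₂,x₁,…,x₁)`, `a(t) = a₁ + a₂t`, with
`Φ'' = (α(N)e^C/(A²+B²)) e^{-Φ/K}`, solves the isothermal Euler–Poisson
system wherever `a(t) ≠ 0`. -/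
theorem stmt_9 {N : ℕ} [NeZero N] (hN : 3 ≤ N) (A B K C a₁ a₂ αN : ℝ)
    (hK : 0 < K) (ha₁ : a₁ ≠ 0) (hAB : 0 < A ^ 2 + B ^ 2) (hαN : 0 < αN)
    (Φ : ℝ → ℝ) (hΦ : ContDiff ℝ 2 Φ)
    (hODE : ∀ s : ℝ, deriv (deriv Φ) s
        - (αN * Real.exp C / (A ^ 2 + B ^ 2)) * Real.exp (-Φ s / K) = 0)
    (a : ℝ → ℝ) (ha : a = fun t => a₁ + a₂ * t)
    (ρ : ℝ → (Fin N → ℝ) → ℝ)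
    (hρ : ρ = fun t x =>
      Real.exp (-Φ ((A * x 0 + B * x 1) / a t) / K + C) / (a t) ^ 2)
    (u : ℝ → (Fin N → ℝ) → Fin N → ℝ)
    (hu : u = fun t x i => deriv a t / a t *
      (if i = 0 then x 0 else if i = 1 then x 1 else x 0))
    (Ψ : ℝ → (Fin N → ℝ) → ℝ)
    (hΨ : Ψ = fun t x => Φ ((A * x 0 + B * x 1) / a t)) :
    ∀ t : ℝ, a t ≠ 0 → ∀ x : Fin N → ℝ,
      (deriv (fun s => ρ s x) t
          + ∑ i : Fin N, pd i (fun y => ρ t y * u t y i) x = 0) ∧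
      (∀ i : Fin N,
        ρ t x * (deriv (fun s => u s x i) t
            + ∑ k : Fin N, u t x k * pd k (fun y => u t y i) x)
          + K * pd i (fun y => ρ t y) x = -(ρ t x * pd i (fun y => Ψ t y) x)) ∧
      lap (Ψ t) x = αN * ρ t x := by
  subst ha hρ hu hΨ
  obtain ⟨M, rfl⟩ : ∃ M, N = M + 3 := ⟨N - 3, by omega⟩
  have hKne : K ≠ 0 := ne_of_gt hK
  have hABne : A ^ 2 + B ^ 2 ≠ 0 := ne_of_gt hAB
  have h10 : (1 : Fin (M + 3)) ≠ 0 := by simp [Fin.ext_iff]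
  have h01 : (0 : Fin (M + 3)) ≠ 1 := h10.symm
  have hΦ2 : ContDiff ℝ ((1 : ℕ) + 1) Φ := by exact_mod_cast hΦ
  have hΦ'diff : Differentiable ℝ (deriv Φ) :=
    ((contDiff_succ_iff_deriv.mp hΦ2).2.2).differentiable (by norm_num)
  have hΦdiff : Differentiable ℝ Φ := hΦ.differentiable (by norm_num)
  have hΦ'' : ∀ s, deriv (deriv Φ) s
      = αN * Real.exp C / (A ^ 2 + B ^ 2) * Real.exp (-Φ s / K) := by
    intro s; have := hODE s; linarith
  have hda : deriv (fun r => a₁ + a₂ * r) = fun _ => a₂ := by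
    funext s
    exact ((by simpa using ((hasDerivAt_id s).const_mul a₂).const_add a₁ :
      HasDerivAt (fun r => a₁ + a₂ * r) a₂ s)).deriv
  intro t ht x
  have hav : a₁ + a₂ * t ≠ 0 := ht
  simp only [hda]
  -- shorthand values (as definitional haves would not unfold, we spell out below)
  -- pd of ρ in coordinates
  have pdρ0 : pd 0 (fun y => Real.exp (-Φ ((A * y 0 + B * y 1) / (a₁ + a₂ * t)) / K + C)
        / (a₁ + a₂ * t) ^ 2) x
      = Real.exp (-Φ ((A * x 0 + B * x 1) / (a₁ + a₂ * t)) / K + C) / (a₁ + a₂ * t) ^ 2 *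
        (-(deriv Φ ((A * x 0 + B * x 1) / (a₁ + a₂ * t))) * (A / (a₁ + a₂ * t)) / K) := by
    rw [pd_congr' _ _ (fun z => Real.exp (-Φ ((A * z + B * x 1) / (a₁ + a₂ * t)) / K + C)
        / (a₁ + a₂ * t) ^ 2) _ (by intro z; simp [Function.update_apply, h10])]
    exact (rho_profile hΦdiff (x 0)).deriv
  have pdρ1 : pd 1 (fun y => Real.exp (-Φ ((A * y 0 + B * y 1) / (a₁ + a₂ * t)) / K + C)
        / (a₁ + a₂ * t) ^ 2) x
      = Real.exp (-Φ ((A * x 0 + B * x 1) / (a₁ + a₂ * t)) / K + C) / (a₁ + a₂ * t) ^ 2 *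
        (-(deriv Φ ((A * x 0 + B * x 1) / (a₁ + a₂ * t))) * (B / (a₁ + a₂ * t)) / K) := by
    rw [pd_congr' _ _ (fun z => Real.exp (-Φ ((A * x 0 + B * z) / (a₁ + a₂ * t)) / K + C)
        / (a₁ + a₂ * t) ^ 2) _ (by intro z; simp [Function.update_apply, h01])]
    exact (rho_profile' hΦdiff (x 1)).deriv
  have pdρi : ∀ i : Fin (M + 3), i ≠ 0 → i ≠ 1 →
      pd i (fun y => Real.exp (-Φ ((A * y 0 + B * y 1) / (a₁ + a₂ * t)) / K + C)
        / (a₁ + a₂ * t) ^ 2) x = 0 := by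
    intro i hi0 hi1
    rw [pd_congr' _ _ (fun _ => Real.exp (-Φ ((A * x 0 + B * x 1) / (a₁ + a₂ * t)) / K + C)
        / (a₁ + a₂ * t) ^ 2) _
        (by intro z; simp [Function.update_apply, Ne.symm hi0, Ne.symm hi1]), deriv_const]
  -- pd of Ψ in coordinates (pointwise)
  have pdΨ0 : ∀ y : Fin (M + 3) → ℝ,
      pd 0 (fun y' => Φ ((A * y' 0 + B * y' 1) / (a₁ + a₂ * t))) y
      = deriv Φ ((A * y 0 + B * y 1) / (a₁ + a₂ * t)) * (A / (a₁ + a₂ * t)) := by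
    intro y
    rw [pd_congr' _ _ (fun z => Φ ((A * z + B * y 1) / (a₁ + a₂ * t))) _
        (by intro z; simp [Function.update_apply, h10])]
    exact (comp_affine_div ((hΦdiff _).hasDerivAt)).deriv
  have pdΨ1 : ∀ y : Fin (M + 3) → ℝ,
      pd 1 (fun y' => Φ ((A * y' 0 + B * y' 1) / (a₁ + a₂ * t))) y
      = deriv Φ ((A * y 0 + B * y 1) / (a₁ + a₂ * t)) * (B / (a₁ + a₂ * t)) := by
    intro y
    rw [pd_congr' _ _ (fun z => Φ ((A * y 0 + B * z) / (a₁ + a₂ * t))) _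
        (by intro z; simp [Function.update_apply, h01])]
    exact (comp_affine_div' ((hΦdiff _).hasDerivAt)).deriv
  have pdΨi : ∀ i : Fin (M + 3), i ≠ 0 → i ≠ 1 → ∀ y : Fin (M + 3) → ℝ,
      pd i (fun y' => Φ ((A * y' 0 + B * y' 1) / (a₁ + a₂ * t))) y = 0 := by
    intro i hi0 hi1 y
    rw [pd_congr' _ _ (fun _ => Φ ((A * y 0 + B * y 1) / (a₁ + a₂ * t))) _
        (by intro z; simp [Function.update_apply, Ne.symm hi0, Ne.symm hi1]), deriv_const]
  -- pd of the u coordinate profiles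
  have pdu0 : ∀ k : Fin (M + 3),
      pd k (fun y => a₂ / (a₁ + a₂ * t) * y 0) x
        = if k = 0 then a₂ / (a₁ + a₂ * t) else 0 := by
    intro k
    by_cases hk : k = 0
    · subst hk
      rw [if_pos rfl, pd_congr' _ _ (fun z => a₂ / (a₁ + a₂ * t) * z) _
          (by intro z; simp)]
      simpa using ((hasDerivAt_id (x 0)).const_mul (a₂ / (a₁ + a₂ * t))).deriv
    · rw [if_neg hk, pd_congr' _ _ (fun _ => a₂ / (a₁ + a₂ * t) * x 0) _
          (by intro z; simp [Function.update_apply, Ne.symm hk]), deriv_const]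
  have pdu1 : ∀ k : Fin (M + 3),
      pd k (fun y => a₂ / (a₁ + a₂ * t) * y 1) x
        = if k = 1 then a₂ / (a₁ + a₂ * t) else 0 := by
    intro k
    by_cases hk : k = 1
    · subst hk
      rw [if_pos rfl, pd_congr' _ _ (fun z => a₂ / (a₁ + a₂ * t) * z) _
          (by intro z; simp)]
      simpa using ((hasDerivAt_id (x 1)).const_mul (a₂ / (a₁ + a₂ * t))).deriv
    · rw [if_neg hk, pd_congr' _ _ (fun _ => a₂ / (a₁ + a₂ * t) * x 1) _
          (by intro z; simp [Function.update_apply, Ne.symm hk]), deriv_const]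
  have hKcancel : ∀ P Q : ℝ, K * (P * (Q / K)) = P * Q := by
    intro P Q
    field_simp
  refine ⟨?_, ?_, ?_⟩
  · -- continuity equation
    rw [(rho_time hΦdiff hKne t hav).deriv]
    rw [sum_split h01 _
        (Real.exp (-Φ ((A * x 0 + B * x 1) / (a₁ + a₂ * t)) / K + C) / (a₁ + a₂ * t) ^ 2 *
          (-(deriv Φ ((A * x 0 + B * x 1) / (a₁ + a₂ * t))) * (A / (a₁ + a₂ * t)) / K) *
            (a₂ / (a₁ + a₂ * t) * x 0)
          + Real.exp (-Φ ((A * x 0 + B * x 1) / (a₁ + a₂ * t)) / K + C) / (a₁ + a₂ * t) ^ 2 *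
            (a₂ / (a₁ + a₂ * t)))
        (Real.exp (-Φ ((A * x 0 + B * x 1) / (a₁ + a₂ * t)) / K + C) / (a₁ + a₂ * t) ^ 2 *
          (-(deriv Φ ((A * x 0 + B * x 1) / (a₁ + a₂ * t))) * (B / (a₁ + a₂ * t)) / K) *
            (a₂ / (a₁ + a₂ * t) * x 1)
          + Real.exp (-Φ ((A * x 0 + B * x 1) / (a₁ + a₂ * t)) / K + C) / (a₁ + a₂ * t) ^ 2 *
            (a₂ / (a₁ + a₂ * t))) ?_]
    · generalize a₁ + a₂ * t = v
      ring
    · intro i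
      by_cases hi0 : i = 0
      · subst hi0
        simp only [eq_self_iff_true, if_true, h01, if_false, add_zero]
        rw [pd_congr' _ _ (fun z =>
            Real.exp (-Φ ((A * z + B * x 1) / (a₁ + a₂ * t)) / K + C) / (a₁ + a₂ * t) ^ 2 *
              (a₂ / (a₁ + a₂ * t) * z)) _
            (by intro z; simp [Function.update_apply, h10])]
        have hprod := (rho_profile hΦdiff (K := K) (C := C) (A := A) (b := B * x 1)
            (av := a₁ + a₂ * t) (x 0)).mul
          ((hasDerivAt_id (x 0)).const_mul (a₂ / (a₁ + a₂ * t)))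
        simp only [id_eq, mul_one] at hprod
        exact hprod.deriv
      · by_cases hi1 : i = 1
        · subst hi1
          simp only [h10, eq_self_iff_true, if_true, if_false, zero_add]
          rw [pd_congr' _ _ (fun z =>
              Real.exp (-Φ ((A * x 0 + B * z) / (a₁ + a₂ * t)) / K + C) / (a₁ + a₂ * t) ^ 2 *
                (a₂ / (a₁ + a₂ * t) * z)) _
              (by intro z; simp [Function.update_apply, h01])]
          have hprod := (rho_profile' hΦdiff (K := K) (C := C) (A := B) (b := A * x 0)
              (av := a₁ + a₂ * t) (x 1)).mul
            ((hasDerivAt_id (x 1)).const_mul (a₂ / (a₁ + a₂ * t)))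
          simp only [id_eq, mul_one] at hprod
          exact hprod.deriv
        · simp only [hi0, hi1, if_false, add_zero]
          rw [pd_congr' _ _ (fun _ =>
              Real.exp (-Φ ((A * x 0 + B * x 1) / (a₁ + a₂ * t)) / K + C) / (a₁ + a₂ * t) ^ 2 *
                (a₂ / (a₁ + a₂ * t) * x 0)) _
              (by intro z; simp [Function.update_apply, Ne.symm hi0, Ne.symm hi1]), deriv_const]
  · -- momentum equations
    intro i
    by_cases hi0 : i = 0
    · subst hi0
      simp only [eq_self_iff_true, if_true]
      rw [(u_time (x 0) t hav).deriv, pdρ0, pdΨ0 x]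
      have hsum : (∑ k : Fin (M + 3), a₂ / (a₁ + a₂ * t) *
            (if k = 0 then x 0 else if k = 1 then x 1 else x 0) *
            pd k (fun y => a₂ / (a₁ + a₂ * t) * y 0) x)
          = a₂ / (a₁ + a₂ * t) * x 0 * (a₂ / (a₁ + a₂ * t)) := by
        rw [Finset.sum_eq_single (0 : Fin (M + 3))]
        · simp [pdu0]
        · intro b _ hb; simp [pdu0, hb]
        · simp
      rw [hsum, hKcancel]
      generalize a₁ + a₂ * t = v
      ring
    · by_cases hi1 : i = 1
      · subst hi1
        simp only [h10, if_false, eq_self_iff_true, if_true]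
        rw [(u_time (x 1) t hav).deriv, pdρ1, pdΨ1 x]
        have hsum : (∑ k : Fin (M + 3), a₂ / (a₁ + a₂ * t) *
              (if k = 0 then x 0 else if k = 1 then x 1 else x 0) *
              pd k (fun y => a₂ / (a₁ + a₂ * t) * y 1) x)
            = a₂ / (a₁ + a₂ * t) * x 1 * (a₂ / (a₁ + a₂ * t)) := by
          rw [Finset.sum_eq_single (1 : Fin (M + 3))]
          · simp [pdu1, if_neg h10]
          · intro b _ hb; simp [pdu1, hb]
          · simp
        rw [hsum, hKcancel]
        generalize a₁ + a₂ * t = v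
        ring
      · simp only [hi0, hi1, if_false]
        rw [(u_time (x 0) t hav).deriv, pdρi i hi0 hi1, pdΨi i hi0 hi1 x]
        have hsum : (∑ k : Fin (M + 3), a₂ / (a₁ + a₂ * t) *
              (if k = 0 then x 0 else if k = 1 then x 1 else x 0) *
              pd k (fun y => a₂ / (a₁ + a₂ * t) * y 0) x)
            = a₂ / (a₁ + a₂ * t) * x 0 * (a₂ / (a₁ + a₂ * t)) := by
          rw [Finset.sum_eq_single (0 : Fin (M + 3))]
          · simp [pdu0]
          · intro b _ hb; simp [pdu0, hb]
          · simp
        rw [hsum]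
        generalize a₁ + a₂ * t = v
        ring
  · -- Poisson equation
    unfold lap
    rw [sum_split h01 _
        (deriv (deriv Φ) ((A * x 0 + B * x 1) / (a₁ + a₂ * t)) * (A / (a₁ + a₂ * t)) *
          (A / (a₁ + a₂ * t)))
        (deriv (deriv Φ) ((A * x 0 + B * x 1) / (a₁ + a₂ * t)) * (B / (a₁ + a₂ * t)) *
          (B / (a₁ + a₂ * t))) ?_]
    · rw [hΦ'' ((A * x 0 + B * x 1) / (a₁ + a₂ * t)), Real.exp_add]
      field_simp
    · intro i
      by_cases hi0 : i = 0
      · subst hi0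
        simp only [eq_self_iff_true, if_true, h01, if_false, add_zero]
        have hfun : (fun y => pd 0 (fun y' : Fin (M + 3) → ℝ =>
            Φ ((A * y' 0 + B * y' 1) / (a₁ + a₂ * t))) y)
            = fun y => deriv Φ ((A * y 0 + B * y 1) / (a₁ + a₂ * t)) * (A / (a₁ + a₂ * t)) :=
          funext pdΨ0
        rw [hfun, pd_congr' _ _ (fun z =>
            deriv Φ ((A * z + B * x 1) / (a₁ + a₂ * t)) * (A / (a₁ + a₂ * t))) _
            (by intro z; simp [Function.update_apply, h10])]
        exact ((comp_affine_div ((hΦ'diff _).hasDerivAt)).mul_const (A / (a₁ + a₂ * t))).deriv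
      · by_cases hi1 : i = 1
        · subst hi1
          simp only [h10, if_false, eq_self_iff_true, if_true, zero_add]
          have hfun : (fun y => pd 1 (fun y' : Fin (M + 3) → ℝ =>
              Φ ((A * y' 0 + B * y' 1) / (a₁ + a₂ * t))) y)
              = fun y => deriv Φ ((A * y 0 + B * y 1) / (a₁ + a₂ * t)) * (B / (a₁ + a₂ * t)) :=
            funext pdΨ1
          rw [hfun, pd_congr' _ _ (fun z =>
              deriv Φ ((A * x 0 + B * z) / (a₁ + a₂ * t)) * (B / (a₁ + a₂ * t))) _
              (by intro z; simp [Function.update_apply, h01])]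
          exact ((comp_affine_div' ((hΦ'diff _).hasDerivAt)).mul_const (B / (a₁ + a₂ * t))).deriv
        · simp only [hi0, hi1, if_false, add_zero]
          have hfun : (fun y => pd i (fun y' : Fin (M + 3) → ℝ =>
              Φ ((A * y' 0 + B * y' 1) / (a₁ + a₂ * t))) y) = fun _ => (0 : ℝ) :=
            funext (pdΨi i hi0 hi1)
          rw [hfun, pd_congr' _ _ (fun _ => (0 : ℝ)) _ (by intro z; simp), deriv_const]
end

section
/- Solutions of form ρ(t,x) = (1/a(t)²)·e^{−Φ((Ax₁+Bx₂)/a(t))/K + C}, u(t,x) = (ȧ/a)(x₁, x₂, x̃₃, ..., x̃_N) where each x̃ᵢ ∈ {x₁, x₂}, a(t) = a₁ + a₂t, and Φ'' = ε*e^{−Φ/K} with ε* = α(N)e^C/(A²+B²), satisfy the isothermal Euler–Poisson equations in ℝᴺ for any choice of the x̃ᵢ. -/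
set_option maxHeartbeats 1000000


lemma comp_lin {M : ℕ} (A B s : ℝ)
    (F : ℝ → ℝ) (i : Fin (M+3)) (x : Fin (M+3) → ℝ) (F' : ℝ)
    (hF : HasDerivAt F F' ((A * x 0 + B * x 1) / s)) :
    HasDerivAt (fun y => F ((A * Function.update x i y 0 + B * Function.update x i y 1) / s))
      (F' * ((if i = 0 then A else if i = 1 then B else 0) / s)) (x i) := by
  have h01 : (0 : Fin (M+3)) ≠ 1 := by
    simp [Fin.ext_iff]
  have hlin : HasDerivAt
      (fun y : ℝ => (A * Function.update x i y 0 + B * Function.update x i y 1) / s)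
      ((if i = 0 then A else if i = 1 then B else 0) / s) (x i) := by
    by_cases h0 : i = 0
    · subst h0
      have e : (fun y : ℝ => (A * Function.update x 0 y 0 + B * Function.update x 0 y 1) / s)
          = fun y : ℝ => (A * y + B * x 1) / s := by
        funext y
        rw [Function.update_apply, Function.update_apply, if_pos rfl, if_neg h01.symm]
      rw [e, if_pos rfl]
      have : HasDerivAt (fun y : ℝ => (A * y + B * x 1) / s) (A * 1 / s) (x 0) :=
        (((hasDerivAt_id (x 0)).const_mul A).add_const (B * x 1)).div_const s
      simpa using this
    · by_cases h1 : i = 1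
      · subst h1
        have e : (fun y : ℝ => (A * Function.update x 1 y 0 + B * Function.update x 1 y 1) / s)
            = fun y : ℝ => (A * x 0 + B * y) / s := by
          funext y
          rw [Function.update_apply, Function.update_apply, if_pos rfl, if_neg h01]
        rw [e, if_neg h0, if_pos rfl]
        have : HasDerivAt (fun y : ℝ => (A * x 0 + B * y) / s) (B * 1 / s) (x 1) :=
          (((hasDerivAt_id (x 1)).const_mul B).const_add (A * x 0)).div_const s
        simpa using this
      · have e : (fun y : ℝ => (A * Function.update x i y 0 + B * Function.update x i y 1) / s)
            = fun _ : ℝ => (A * x 0 + B * x 1) / s := by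
          funext y
          rw [Function.update_apply, Function.update_apply,
            if_neg (Ne.symm h0), if_neg (Ne.symm h1)]
        rw [e, if_neg h0, if_neg h1]
        simpa using hasDerivAt_const (x i) ((A * x 0 + B * x 1) / s)
  have hF' : HasDerivAt F F'
      ((A * Function.update x i (x i) 0 + B * Function.update x i (x i) 1) / s) := by
    rw [Function.update_eq_self]; exact hF
  simpa [Function.comp_def] using hF'.comp (x i) hlin

lemma pd_comp {M : ℕ} (A B s : ℝ)
    (F : ℝ → ℝ) (i : Fin (M+3)) (x : Fin (M+3) → ℝ) (F' : ℝ)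
    (hF : HasDerivAt F F' ((A * x 0 + B * x 1) / s)) :
    pd i (fun y => F ((A * y 0 + B * y 1) / s)) x
      = F' * ((if i = 0 then A else if i = 1 then B else 0) / s) :=
  (comp_lin A B s F i x F' hF).deriv

lemma coord_deriv {M : ℕ} (d : ℝ) (j i : Fin (M+3)) (x : Fin (M+3) → ℝ) :
    HasDerivAt (fun y : ℝ => d * Function.update x i y j) (if j = i then d else 0) (x i) := by
  by_cases h : j = i
  · subst h
    simp only [if_pos rfl]
    have : HasDerivAt (fun y : ℝ => d * y) (d * 1) (x j) := (hasDerivAt_id (x j)).const_mul d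
    simpa [Function.update_self] using this
  · simp only [if_neg h]
    have e : (fun y : ℝ => d * Function.update x i y j) = fun _ : ℝ => d * x j := by
      funext y; rw [Function.update_apply, if_neg h]
    rw [e]
    exact hasDerivAt_const _ _

lemma pd_coord {M : ℕ} (d : ℝ) (j i : Fin (M+3)) (x : Fin (M+3) → ℝ) :
    pd i (fun y => d * y j) x = if j = i then d else 0 :=
  (coord_deriv d j i x).deriv

/-- Variants of Theorem 2: `u = (ȧ/a)(x₁, x₂, x̃₃, …, x̃_N)` with each
`x̃ᵢ ∈ {x₁, x₂}` (encoded by `c : Fin N → Fin N` with values in `{0,1}`),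
together with `ρ = (1/a²) e^{-Φ((Ax₁+Bx₂)/a)/K + C}`, `a = a₁ + a₂t` and
`Φ'' = (α(N)e^C/(A²+B²)) e^{-Φ/K}`, solve the isothermal Euler–Poisson
equations wherever `a(t) ≠ 0`. -/
theorem stmt_17 {N : ℕ} [NeZero N] (hN : 3 ≤ N) (A B K C a₁ a₂ αN : ℝ)
    (hK : 0 < K) (ha₁ : a₁ ≠ 0) (hAB : 0 < A ^ 2 + B ^ 2) (hαN : 0 < αN)
    (c : Fin N → Fin N) (hc0 : c 0 = 0) (hc1 : c 1 = 1)
    (hc : ∀ i, c i = 0 ∨ c i = 1)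
    (Φ : ℝ → ℝ) (hΦ : ContDiff ℝ 2 Φ)
    (hODE : ∀ s : ℝ, deriv (deriv Φ) s
        = (αN * Real.exp C / (A ^ 2 + B ^ 2)) * Real.exp (-Φ s / K))
    (a : ℝ → ℝ) (ha : a = fun t => a₁ + a₂ * t)
    (ρ : ℝ → (Fin N → ℝ) → ℝ)
    (hρ : ρ = fun t x =>
      Real.exp (-Φ ((A * x 0 + B * x 1) / a t) / K + C) / (a t) ^ 2)
    (u : ℝ → (Fin N → ℝ) → Fin N → ℝ)
    (hu : u = fun t x i => deriv a t / a t * x (c i))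
    (Ψ : ℝ → (Fin N → ℝ) → ℝ)
    (hΨ : Ψ = fun t x => Φ ((A * x 0 + B * x 1) / a t)) :
    ∀ t : ℝ, a t ≠ 0 → ∀ x : Fin N → ℝ,
      (deriv (fun s => ρ s x) t
          + ∑ i : Fin N, pd i (fun y => ρ t y * u t y i) x = 0) ∧
      (∀ i : Fin N,
        ρ t x * (deriv (fun s => u s x i) t
            + ∑ k : Fin N, u t x k * pd k (fun y => u t y i) x)
          + K * pd i (fun y => ρ t y) x = -(ρ t x * pd i (fun y => Ψ t y) x)) ∧
      lap (Ψ t) x = αN * ρ t x := by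
  obtain ⟨M, rfl⟩ : ∃ M, N = M + 3 := ⟨N - 3, by omega⟩
  subst ha hρ hu hΨ
  have hK' : K ≠ 0 := ne_of_gt hK
  have hAB' : A ^ 2 + B ^ 2 ≠ 0 := ne_of_gt hAB
  have h01 : (0 : Fin (M+3)) ≠ 1 := by simp [Fin.ext_iff]
  have hΦ2 : ContDiff ℝ ((1:ℕ)+1) Φ := by exact_mod_cast hΦ
  have hd := contDiff_succ_iff_deriv.mp hΦ2
  have hΦd : Differentiable ℝ Φ := hd.1
  have hΦ'd : Differentiable ℝ (deriv Φ) := hd.2.2.differentiable (by simp)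
  have hda : ∀ τ : ℝ, deriv (fun t => a₁ + a₂ * t) τ = a₂ := by
    intro τ
    have : HasDerivAt (fun t : ℝ => a₁ + a₂ * t) a₂ τ := by
      simpa using ((hasDerivAt_id τ).const_mul a₂).const_add a₁
    exact this.deriv
  intro t hat x
  have hs' : (a₁ + a₂ * t) ≠ 0 := hat
  simp only [hda]
  set s : ℝ := a₁ + a₂ * t with hsdef
  set z : ℝ := (A * x 0 + B * x 1) / s with hzdef
  set E : ℝ := Real.exp (-Φ z / K + C) with hEdef
  have hs : s ≠ 0 := hs'
  have h_a : HasDerivAt (fun τ : ℝ => a₁ + a₂ * τ) a₂ t := by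
    simpa using ((hasDerivAt_id t).const_mul a₂).const_add a₁
  have hE : HasDerivAt (fun r => Real.exp (-Φ r / K + C) / s ^ 2)
      (E * (-(deriv Φ z) / K) / s ^ 2) z :=
    ((((hΦd z).hasDerivAt.neg.div_const K).add_const C).exp).div_const (s ^ 2)
  refine ⟨?_, ?_, ?_⟩
  · -- continuity
    have hw : HasDerivAt (fun τ : ℝ => (A * x 0 + B * x 1) / (a₁ + a₂ * τ))
        ((0 * s - (A * x 0 + B * x 1) * a₂) / s ^ 2) t :=
      (hasDerivAt_const t _).div h_a hs
    have hphi : HasDerivAt (fun τ : ℝ => Φ ((A * x 0 + B * x 1) / (a₁ + a₂ * τ)))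
        (deriv Φ z * ((0 * s - (A * x 0 + B * x 1) * a₂) / s ^ 2)) t :=
      (hΦd z).hasDerivAt.comp t hw
    have hnum : HasDerivAt
        (fun τ : ℝ => Real.exp (-Φ ((A * x 0 + B * x 1) / (a₁ + a₂ * τ)) / K + C))
        (E * (-(deriv Φ z * ((0 * s - (A * x 0 + B * x 1) * a₂) / s ^ 2)) / K)) t :=
      ((hphi.neg.div_const K).add_const C).exp
    have hden : HasDerivAt (fun τ : ℝ => (a₁ + a₂ * τ) ^ 2) (2 * s ^ 1 * a₂) t := by
      exact_mod_cast h_a.pow 2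
    have hρt : deriv (fun τ : ℝ =>
          Real.exp (-Φ ((A * x 0 + B * x 1) / (a₁ + a₂ * τ)) / K + C) / (a₁ + a₂ * τ) ^ 2) t
        = ((E * (-(deriv Φ z * ((0 * s - (A * x 0 + B * x 1) * a₂) / s ^ 2)) / K)) * s ^ 2
            - E * (2 * s ^ 1 * a₂)) / (s ^ 2) ^ 2 :=
      (hnum.div hden (pow_ne_zero 2 hs)).deriv
    have hprod : ∀ i : Fin (M+3),
        pd i (fun y => Real.exp (-Φ ((A * y 0 + B * y 1) / s) / K + C) / s ^ 2
            * (a₂ / s * y (c i))) x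
          = (E * (-(deriv Φ z) / K) / s ^ 2
                * ((if i = 0 then A else if i = 1 then B else 0) / s)) * (a₂ / s * x (c i))
            + E / s ^ 2 * (if c i = i then a₂ / s else 0) := by
      intro i
      have h1 := comp_lin A B s (fun r => Real.exp (-Φ r / K + C) / s ^ 2) i x _ hE
      have h2 := coord_deriv (a₂ / s) (c i) i x
      have h3 := (h1.mul h2).deriv
      simp only [Function.update_eq_self] at h3
      exact h3
    have hterm : ∀ i : Fin (M+3),
        (E * (-(deriv Φ z) / K) / s ^ 2
              * ((if i = 0 then A else if i = 1 then B else 0) / s)) * (a₂ / s * x (c i))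
            + E / s ^ 2 * (if c i = i then a₂ / s else 0)
          = (if i = 0 then
              (E * (-(deriv Φ z) / K) / s ^ 2 * (A / s)) * (a₂ / s * x 0)
                + E / s ^ 2 * (a₂ / s) else 0)
            + (if i = 1 then
              (E * (-(deriv Φ z) / K) / s ^ 2 * (B / s)) * (a₂ / s * x 1)
                + E / s ^ 2 * (a₂ / s) else 0) := by
      intro i
      by_cases h0 : i = 0
      · subst h0; simp [hc0, h01]
      · by_cases h1 : i = 1
        · subst h1; simp [hc1, h0, h01]
        · have hci : c i ≠ i := by
            rcases hc i with h | h <;> rw [h]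
            · exact Ne.symm h0
            · exact Ne.symm h1
          simp [h0, h1, hci]
    rw [hρt, Finset.sum_congr rfl fun i _ => hprod i,
      Finset.sum_congr rfl fun i _ => hterm i, Finset.sum_add_distrib,
      Finset.sum_ite_eq', Finset.sum_ite_eq']
    simp only [Finset.mem_univ, if_true]
    clear_value E z s
    field_simp
    ring
  · -- momentum
    intro i
    have hut : deriv (fun τ : ℝ => a₂ / (a₁ + a₂ * τ) * x (c i)) t
        = (0 * s - a₂ * a₂) / s ^ 2 * x (c i) :=
      (((hasDerivAt_const t a₂).div h_a hs).mul_const (x (c i))).deriv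
    have hpdu : ∀ k : Fin (M+3), pd k (fun y => a₂ / s * y (c i)) x
        = if c i = k then a₂ / s else 0 := fun k => pd_coord (a₂ / s) (c i) k x
    have hsum : ∑ k : Fin (M+3), (a₂ / s * x (c k)) * pd k (fun y => a₂ / s * y (c i)) x
        = a₂ / s * x (c i) * (a₂ / s) := by
      rw [Finset.sum_congr rfl fun k _ => by rw [hpdu k]]
      rw [Finset.sum_congr rfl fun k _ => (mul_ite _ _ _ _ : _ = ite (c i = k) _ _)]
      simp only [mul_zero]
      rw [Finset.sum_ite_eq]
      rcases hc i with h | h <;> simp [h, hc0, hc1]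
    have hpdρ : pd i (fun y => Real.exp (-Φ ((A * y 0 + B * y 1) / s) / K + C) / s ^ 2) x
        = (E * (-(deriv Φ z) / K) / s ^ 2)
            * ((if i = 0 then A else if i = 1 then B else 0) / s) :=
      pd_comp A B s _ i x _ hE
    have hpdΨ : pd i (fun y => Φ ((A * y 0 + B * y 1) / s)) x
        = deriv Φ z * ((if i = 0 then A else if i = 1 then B else 0) / s) :=
      pd_comp A B s Φ i x _ (hΦd z).hasDerivAt
    rw [hut, hsum, hpdρ, hpdΨ]
    generalize (if i = 0 then A else if i = 1 then B else 0) = D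
    clear_value E z s
    field_simp
    ring
  · -- Poisson
    have hlapterm : ∀ i : Fin (M+3),
        pd i (fun y => pd i (fun y' => Φ ((A * y' 0 + B * y' 1) / s)) y) x
          = deriv (deriv Φ) z * ((if i = 0 then A else if i = 1 then B else 0) / s)
              * ((if i = 0 then A else if i = 1 then B else 0) / s) := by
      intro i
      have h1 : (fun y : Fin (M+3) → ℝ => pd i (fun y' => Φ ((A * y' 0 + B * y' 1) / s)) y)
          = fun y => deriv Φ ((A * y 0 + B * y 1) / s)
              * ((if i = 0 then A else if i = 1 then B else 0) / s) :=
        funext fun y => pd_comp A B s Φ i y _ (hΦd _).hasDerivAt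
      rw [h1]
      exact pd_comp A B s (fun r => deriv Φ r * _) i x _ ((hΦ'd z).hasDerivAt.mul_const _)
    unfold lap
    rw [Finset.sum_congr rfl fun i _ => hlapterm i]
    have hsplit : ∀ i : Fin (M+3),
        deriv (deriv Φ) z * ((if i = 0 then A else if i = 1 then B else 0) / s)
            * ((if i = 0 then A else if i = 1 then B else 0) / s)
          = (if i = 0 then deriv (deriv Φ) z * (A / s) * (A / s) else 0)
            + (if i = 1 then deriv (deriv Φ) z * (B / s) * (B / s) else 0) := by
      intro i
      by_cases h0 : i = 0
      · subst h0; simp [h01.symm]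
      · by_cases h1 : i = 1
        · subst h1; simp [h01]
        · simp [h0, h1]
    rw [Finset.sum_congr rfl fun i _ => hsplit i, Finset.sum_add_distrib,
      Finset.sum_ite_eq', Finset.sum_ite_eq']
    simp only [Finset.mem_univ, if_true]
    rw [hODE z, hEdef]
    rw [show -Φ z / K + C = C + -Φ z / K by ring, Real.exp_add]
    clear_value z s
    field_simp
end
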